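/- arXiv:1712.01922 — 2 statements merged into one kernel-verified Lean document; each statement's English description precedes it below -/
import Mathlib

section
/- Let C be a monoidal category and A = (A, μ, η, Δ, ε) a Frobenius algebra object in C. Then the induction functor I : C → Mod_A, x ↦ A ⊗ x, is right adjoint to the forgetful functor U : Mod_A → C. The adjunction bijections are given by ψ(f) = (ε ⊗ id_x) ∘ f for f : m → I(x) in Mod_A, and φ(g) = (id_A ⊗ (g ∘ ρ_m)) ∘ ((Δ ∘ η) ⊗ id_m) for g : U(m) → x in C, and these maps are mutually inverse. -/
open CategoryTheory MonoidalCategory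

universe v u

/-- for a Frobenius algebra object `A = (A, μ, η, Δ, ε)` in a monoidal category,
the induction functor `I : C → Mod_A`, `x ↦ A ⊗ x`, is right adjoint to the forgetful functor
`U : Mod_A → C`, with adjunction bijections `ψ(f) = (ε ⊗ id_x) ∘ f` for a module morphism
`f : m → I(x)` and `φ(g) = (id_A ⊗ (g ∘ ρ_m)) ∘ ((Δ ∘ η) ⊗ id_m)` for `g : U(m) → x`;
these maps are mutually inverse (and `φ(g)` is a module morphism). -/
theorem induction_right_adjoint_to_forget
    {C : Type u} [Category.{v} C] [MonoidalCategory C] (A : Mon C)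
    (Δ : A.X ⟶ A.X ⊗ A.X) (ε : A.X ⟶ 𝟙_ C)
    -- coalgebra axioms
    (hcoassoc : Δ ≫ (Δ ▷ A.X) ≫ (α_ A.X A.X A.X).hom = Δ ≫ (A.X ◁ Δ))
    (hcounit_l : Δ ≫ (ε ▷ A.X) ≫ (λ_ A.X).hom = 𝟙 A.X)
    (hcounit_r : Δ ≫ (A.X ◁ ε) ≫ (ρ_ A.X).hom = 𝟙 A.X)
    -- Frobenius compatibility
    (hfrob₁ : (Δ ▷ A.X) ≫ (α_ A.X A.X A.X).hom ≫ (A.X ◁ MonObj.mul (X := A.X)) = MonObj.mul (X := A.X) ≫ Δ)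
    (hfrob₂ : (A.X ◁ Δ) ≫ (α_ A.X A.X A.X).inv ≫ (MonObj.mul (X := A.X) ▷ A.X) = MonObj.mul (X := A.X) ≫ Δ)
    (x : C) (m : Mod C A.X) :
    let ψ : (m.X ⟶ A.X ⊗ x) → (m.X ⟶ x) :=
      fun f => f ≫ (ε ▷ x) ≫ (λ_ x).hom
    let φ : (m.X ⟶ x) → (m.X ⟶ A.X ⊗ x) :=
      fun g => (λ_ m.X).inv ≫ ((MonObj.one (X := A.X) ≫ Δ) ▷ m.X) ≫ (α_ A.X A.X m.X).hom ≫
        (A.X ◁ (ModObj.smul (M := A.X) (X := m.X) ≫ g))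
    -- φ g is a morphism of A-modules from m to the induced module I(x) = A ⊗ x
    (∀ g : m.X ⟶ x,
        ModObj.smul (M := A.X) (X := m.X) ≫ φ g = (A.X ◁ φ g) ≫ ((α_ A.X A.X x).inv ≫ (MonObj.mul (X := A.X) ▷ x))) ∧
    -- ψ and φ are mutually inverse
    (∀ g : m.X ⟶ x, ψ (φ g) = g) ∧
    (∀ f : m.X ⟶ A.X ⊗ x,
        ModObj.smul (M := A.X) (X := m.X) ≫ f = (A.X ◁ f) ≫ ((α_ A.X A.X x).inv ≫ (MonObj.mul (X := A.X) ▷ x)) →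
          φ (ψ f) = f) := by
  intro ψ φ
  -- Key consequences of the Frobenius relations: the "coaction" `η ≫ Δ` recovers `Δ`.
  have L1 : (λ_ A.X).inv ≫ ((MonObj.one (X := A.X) ≫ Δ) ▷ A.X) ≫ (α_ A.X A.X A.X).hom ≫ (A.X ◁ MonObj.mul (X := A.X))
      = Δ := by
    rw [comp_whiskerRight]
    slice_lhs 3 5 => rw [hfrob₁]
    simp [MonObj.one_mul_assoc]
  have L2 : (ρ_ A.X).inv ≫ (A.X ◁ (MonObj.one (X := A.X) ≫ Δ)) ≫ (α_ A.X A.X A.X).inv ≫ (MonObj.mul (X := A.X) ▷ A.X)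
      = Δ := by
    rw [MonoidalCategory.whiskerLeft_comp]
    slice_lhs 3 5 => rw [hfrob₂]
    simp [MonObj.mul_one_assoc]
  refine ⟨fun g => ?_, fun g => ?_, fun f hf => ?_⟩
  · -- `φ g` is a module morphism
    show ModObj.smul (M := A.X) (X := m.X) ≫ ((λ_ m.X).inv ≫ ((MonObj.one (X := A.X) ≫ Δ) ▷ m.X) ≫ (α_ A.X A.X m.X).hom ≫
          (A.X ◁ (ModObj.smul (M := A.X) (X := m.X) ≫ g))) =
        (A.X ◁ ((λ_ m.X).inv ≫ ((MonObj.one (X := A.X) ≫ Δ) ▷ m.X) ≫ (α_ A.X A.X m.X).hom ≫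
          (A.X ◁ (ModObj.smul (M := A.X) (X := m.X) ≫ g)))) ≫ ((α_ A.X A.X x).inv ≫ (MonObj.mul (X := A.X) ▷ x))
    have lhs_eq : ModObj.smul (M := A.X) (X := m.X) ≫ ((λ_ m.X).inv ≫ ((MonObj.one (X := A.X) ≫ Δ) ▷ m.X) ≫ (α_ A.X A.X m.X).hom ≫
        (A.X ◁ (ModObj.smul (M := A.X) (X := m.X) ≫ g))) = (Δ ▷ m.X) ≫ (α_ A.X A.X m.X).hom ≫ (A.X ◁ (ModObj.smul (M := A.X) (X := m.X) ≫ g)) := by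
      calc ModObj.smul (M := A.X) (X := m.X) ≫ ((λ_ m.X).inv ≫ ((MonObj.one (X := A.X) ≫ Δ) ▷ m.X) ≫ (α_ A.X A.X m.X).hom ≫
            (A.X ◁ (ModObj.smul (M := A.X) (X := m.X) ≫ g)))
          = (λ_ (A.X ⊗ m.X)).inv ≫ (𝟙_ C ◁ ModObj.smul (M := A.X) (X := m.X)) ≫ ((MonObj.one (X := A.X) ≫ Δ) ▷ m.X) ≫
            (α_ A.X A.X m.X).hom ≫ (A.X ◁ ModObj.smul (M := A.X) (X := m.X)) ≫ (A.X ◁ g) := by monoidal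
        _ = (λ_ (A.X ⊗ m.X)).inv ≫ ((MonObj.one (X := A.X) ≫ Δ) ▷ (A.X ⊗ m.X)) ≫ ((A.X ⊗ A.X) ◁ ModObj.smul (M := A.X) (X := m.X)) ≫
            (α_ A.X A.X m.X).hom ≫ (A.X ◁ ModObj.smul (M := A.X) (X := m.X)) ≫ (A.X ◁ g) := by
            rw [whisker_exchange_assoc]
        _ = (λ_ (A.X ⊗ m.X)).inv ≫ ((MonObj.one (X := A.X) ≫ Δ) ▷ (A.X ⊗ m.X)) ≫
            (α_ A.X A.X (A.X ⊗ m.X)).hom ≫ (A.X ◁ (A.X ◁ ModObj.smul (M := A.X) (X := m.X))) ≫ (A.X ◁ ModObj.smul (M := A.X) (X := m.X)) ≫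
            (A.X ◁ g) := by monoidal
        _ = (λ_ (A.X ⊗ m.X)).inv ≫ ((MonObj.one (X := A.X) ≫ Δ) ▷ (A.X ⊗ m.X)) ≫
            (α_ A.X A.X (A.X ⊗ m.X)).hom ≫ (A.X ◁ ((α_ A.X A.X m.X).inv ≫ (MonObj.mul (X := A.X) ▷ m.X) ≫
              ModObj.smul (M := A.X) (X := m.X))) ≫ (A.X ◁ g) := by
            rw [← MonoidalCategory.whiskerLeft_comp_assoc, (show A.X ◁ ModObj.smul (M := A.X) (X := m.X) ≫ ModObj.smul (M := A.X) (X := m.X) = (α_ A.X A.X m.X).inv ≫ (MonObj.mul (X := A.X) ▷ m.X) ≫ ModObj.smul (M := A.X) (X := m.X) from Mod.assoc_flip (M := m)),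
              MonoidalCategory.whiskerLeft_comp, MonoidalCategory.whiskerLeft_comp]
        _ = (((λ_ A.X).inv ≫ ((MonObj.one (X := A.X) ≫ Δ) ▷ A.X) ≫ (α_ A.X A.X A.X).hom ≫
              (A.X ◁ MonObj.mul (X := A.X))) ▷ m.X) ≫
            (α_ A.X A.X m.X).hom ≫ (A.X ◁ ModObj.smul (M := A.X) (X := m.X)) ≫ (A.X ◁ g) := by monoidal
        _ = (Δ ▷ m.X) ≫ (α_ A.X A.X m.X).hom ≫ (A.X ◁ (ModObj.smul (M := A.X) (X := m.X) ≫ g)) := by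
            rw [L1]; simp
    have rhs_eq : (A.X ◁ ((λ_ m.X).inv ≫ ((MonObj.one (X := A.X) ≫ Δ) ▷ m.X) ≫ (α_ A.X A.X m.X).hom ≫
        (A.X ◁ (ModObj.smul (M := A.X) (X := m.X) ≫ g)))) ≫ ((α_ A.X A.X x).inv ≫ (MonObj.mul (X := A.X) ▷ x)) =
        (Δ ▷ m.X) ≫ (α_ A.X A.X m.X).hom ≫ (A.X ◁ (ModObj.smul (M := A.X) (X := m.X) ≫ g)) := by
      calc (A.X ◁ ((λ_ m.X).inv ≫ ((MonObj.one (X := A.X) ≫ Δ) ▷ m.X) ≫ (α_ A.X A.X m.X).hom ≫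
            (A.X ◁ (ModObj.smul (M := A.X) (X := m.X) ≫ g)))) ≫ ((α_ A.X A.X x).inv ≫ (MonObj.mul (X := A.X) ▷ x))
          = (A.X ◁ (λ_ m.X).inv) ≫ (A.X ◁ ((MonObj.one (X := A.X) ≫ Δ) ▷ m.X)) ≫
            (A.X ◁ (α_ A.X A.X m.X).hom) ≫ (α_ A.X A.X (A.X ⊗ m.X)).inv ≫
            ((A.X ⊗ A.X) ◁ (ModObj.smul (M := A.X) (X := m.X) ≫ g)) ≫ (MonObj.mul (X := A.X) ▷ x) := by monoidal
        _ = (A.X ◁ (λ_ m.X).inv) ≫ (A.X ◁ ((MonObj.one (X := A.X) ≫ Δ) ▷ m.X)) ≫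
            (A.X ◁ (α_ A.X A.X m.X).hom) ≫ (α_ A.X A.X (A.X ⊗ m.X)).inv ≫
            (MonObj.mul (X := A.X) ▷ (A.X ⊗ m.X)) ≫ (A.X ◁ (ModObj.smul (M := A.X) (X := m.X) ≫ g)) := by
            rw [whisker_exchange]
        _ = (((ρ_ A.X).inv ≫ (A.X ◁ (MonObj.one (X := A.X) ≫ Δ)) ≫ (α_ A.X A.X A.X).inv ≫
              (MonObj.mul (X := A.X) ▷ A.X)) ▷ m.X) ≫
            (α_ A.X A.X m.X).hom ≫ (A.X ◁ (ModObj.smul (M := A.X) (X := m.X) ≫ g)) := by monoidal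
        _ = (Δ ▷ m.X) ≫ (α_ A.X A.X m.X).hom ≫ (A.X ◁ (ModObj.smul (M := A.X) (X := m.X) ≫ g)) := by rw [L2]
    rw [lhs_eq, rhs_eq]
  · -- ψ ∘ φ = id
    show ((λ_ m.X).inv ≫ ((MonObj.one (X := A.X) ≫ Δ) ▷ m.X) ≫ (α_ A.X A.X m.X).hom ≫
        (A.X ◁ (ModObj.smul (M := A.X) (X := m.X) ≫ g))) ≫ (ε ▷ x) ≫ (λ_ x).hom = g
    calc ((λ_ m.X).inv ≫ ((MonObj.one (X := A.X) ≫ Δ) ▷ m.X) ≫ (α_ A.X A.X m.X).hom ≫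
          (A.X ◁ (ModObj.smul (M := A.X) (X := m.X) ≫ g))) ≫ (ε ▷ x) ≫ (λ_ x).hom
        = (λ_ m.X).inv ≫ ((MonObj.one (X := A.X) ≫ Δ) ▷ m.X) ≫ (α_ A.X A.X m.X).hom ≫
          (A.X ◁ (ModObj.smul (M := A.X) (X := m.X) ≫ g)) ≫ (ε ▷ x) ≫ (λ_ x).hom := by simp
      _ = (λ_ m.X).inv ≫ ((MonObj.one (X := A.X) ≫ Δ) ▷ m.X) ≫ (α_ A.X A.X m.X).hom ≫
          (ε ▷ (A.X ⊗ m.X)) ≫ (𝟙_ C ◁ (ModObj.smul (M := A.X) (X := m.X) ≫ g)) ≫ (λ_ x).hom := by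
          rw [whisker_exchange_assoc]
      _ = (λ_ m.X).inv ≫ ((MonObj.one (X := A.X) ≫ Δ ≫ (ε ▷ A.X) ≫ (λ_ A.X).hom) ▷ m.X) ≫ ModObj.smul (M := A.X) (X := m.X) ≫ g := by
          monoidal
      _ = (λ_ m.X).inv ≫ (MonObj.one (X := A.X) ▷ m.X) ≫ ModObj.smul (M := A.X) (X := m.X) ≫ g := by rw [hcounit_l, Category.comp_id]
      _ = g := by simp
  · -- φ ∘ ψ = id on module morphisms
    show (λ_ m.X).inv ≫ ((MonObj.one (X := A.X) ≫ Δ) ▷ m.X) ≫ (α_ A.X A.X m.X).hom ≫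
        (A.X ◁ (ModObj.smul (M := A.X) (X := m.X) ≫ (f ≫ (ε ▷ x) ≫ (λ_ x).hom))) = f
    calc (λ_ m.X).inv ≫ ((MonObj.one (X := A.X) ≫ Δ) ▷ m.X) ≫ (α_ A.X A.X m.X).hom ≫
          (A.X ◁ (ModObj.smul (M := A.X) (X := m.X) ≫ (f ≫ (ε ▷ x) ≫ (λ_ x).hom)))
        = (λ_ m.X).inv ≫ ((MonObj.one (X := A.X) ≫ Δ) ▷ m.X) ≫ (α_ A.X A.X m.X).hom ≫
          (A.X ◁ ((A.X ◁ f) ≫ (α_ A.X A.X x).inv ≫ (MonObj.mul (X := A.X) ▷ x) ≫ (ε ▷ x) ≫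
            (λ_ x).hom)) := by rw [reassoc_of% hf]
      _ = (λ_ m.X).inv ≫ ((MonObj.one (X := A.X) ≫ Δ) ▷ m.X) ≫ ((A.X ⊗ A.X) ◁ f) ≫
          (α_ A.X A.X (A.X ⊗ x)).hom ≫ (A.X ◁ (α_ A.X A.X x).inv) ≫
          (A.X ◁ (MonObj.mul (X := A.X) ▷ x)) ≫ (A.X ◁ (ε ▷ x)) ≫ (A.X ◁ (λ_ x).hom) := by monoidal
      _ = (λ_ m.X).inv ≫ (𝟙_ C ◁ f) ≫ ((MonObj.one (X := A.X) ≫ Δ) ▷ (A.X ⊗ x)) ≫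
          (α_ A.X A.X (A.X ⊗ x)).hom ≫ (A.X ◁ (α_ A.X A.X x).inv) ≫
          (A.X ◁ (MonObj.mul (X := A.X) ▷ x)) ≫ (A.X ◁ (ε ▷ x)) ≫ (A.X ◁ (λ_ x).hom) := by
          rw [← whisker_exchange_assoc]
      _ = f ≫ (((λ_ A.X).inv ≫ ((MonObj.one (X := A.X) ≫ Δ) ▷ A.X) ≫ (α_ A.X A.X A.X).hom ≫ (A.X ◁ MonObj.mul (X := A.X)) ≫
            (A.X ◁ ε) ≫ (ρ_ A.X).hom) ▷ x) := by monoidal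
      _ = f ≫ ((Δ ≫ (A.X ◁ ε) ≫ (ρ_ A.X).hom) ▷ x) := by rw [reassoc_of% L1]
      _ = f := by rw [hcounit_r]; simp
end

section
/- Let C be a braided monoidal category and Z(C) its Drinfeld center, with braiding on Z(C) given by half-braidings. For objects u, v, x, y of C, equip u ⊗ v and x ⊗ y with the half-braidings γ_{u⊗v;c} = (β_{c,u}^{-1} ⊗ id_v) ∘ (id_u ⊗ β_{v,c}). Then the family φ_{u,v,x,y} := id_u ⊗ β_{v,x} ⊗ id_y makes the assignment (u, v) ↦ (u ⊗ v, γ_{u⊗v}) into a braided monoidal functor from C̄ ⊠ C to Z(C); i.e. φ intertwines the braiding β^{-1}_{u,x} ⊗ β_{v,y} of C̄ ⊠ C with the half-braiding braiding of Z(C): φ_{x,y,u,v} ∘ c^Z_{u⊗v, x⊗y} = (β_{u,x}^{-1} ⊗ β_{v,y}) ∘ φ_{u,v,x,y}. -/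
open CategoryTheory MonoidalCategory

universe v u

variable {C : Type u} [Category.{v} C] [MonoidalCategory C] [BraidedCategory C]

/-- The half-braiding `γ_{u⊗v;c} = (β_{c,u}^{-1} ⊗ id_v) ∘ (id_u ⊗ β_{v,c})` on `u ⊗ v`. -/
noncomputable def halfBraidingG (u v c : C) : (u ⊗ v) ⊗ c ⟶ c ⊗ (u ⊗ v) :=
  (α_ u v c).hom ≫ (u ◁ (β_ v c).hom) ≫ (α_ u c v).inv ≫ ((β_ c u).inv ▷ v) ≫
    (α_ c u v).hom

/-- The monoidal structure morphism `φ_{u,v,x,y} := id_u ⊗ β_{v,x} ⊗ id_y` of the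
canonical functor `C̄ ⊠ C → Z(C)`. -/
noncomputable def phiG (u v x y : C) : (u ⊗ v) ⊗ (x ⊗ y) ⟶ (u ⊗ x) ⊗ (v ⊗ y) :=
  (α_ u v (x ⊗ y)).hom ≫ (u ◁ (α_ v x y).inv) ≫ (u ◁ ((β_ v x).hom ▷ y)) ≫
    (u ◁ (α_ x v y).hom) ≫ (α_ u x (v ⊗ y)).inv

/-- `φ` intertwines the braiding `β^{-1}_{u,x} ⊗ β_{v,y}` of `C̄ ⊠ C` with the
half-braiding braiding `c^Z` of the Drinfeld center:
`φ_{x,y,u,v} ∘ c^Z_{u⊗v, x⊗y} = (β_{u,x}^{-1} ⊗ β_{v,y}) ∘ φ_{u,v,x,y}`,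
so that `(u, v) ↦ (u ⊗ v, γ_{u⊗v})` is a braided monoidal functor. -/
theorem phi_intertwines_braidings (u v x y : C) :
    halfBraidingG u v (x ⊗ y) ≫ phiG x y u v =
      phiG u v x y ≫ (tensorHom (β_ x u).inv (β_ v y).hom) := by
  simp only [halfBraidingG, phiG, BraidedCategory.braiding_tensor_right_hom,
    BraidedCategory.braiding_tensor_left_inv, MonoidalCategory.tensorHom_def]
  calc _ = 𝟙 ((u ⊗ v) ⊗ (x ⊗ y)) ⊗≫ u ◁ (β_ v x).hom ▷ y ⊗≫ (u ⊗ x) ◁ (β_ v y).hom ⊗≫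
        (β_ x u).inv ▷ (y ⊗ v) ⊗≫ x ◁ (((β_ y u).inv ≫ (β_ y u).hom) ▷ v) ⊗≫
        𝟙 ((x ⊗ u) ⊗ (y ⊗ v)) := by monoidal
    _ = 𝟙 ((u ⊗ v) ⊗ (x ⊗ y)) ⊗≫ u ◁ (β_ v x).hom ▷ y ⊗≫
        ((u ⊗ x) ◁ (β_ v y).hom ≫ (β_ x u).inv ▷ (y ⊗ v)) ⊗≫ 𝟙 ((x ⊗ u) ⊗ (y ⊗ v)) := by
        rw [Iso.inv_hom_id]; monoidal
    _ = 𝟙 ((u ⊗ v) ⊗ (x ⊗ y)) ⊗≫ u ◁ (β_ v x).hom ▷ y ⊗≫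
        ((β_ x u).inv ▷ (v ⊗ y) ≫ (x ⊗ u) ◁ (β_ v y).hom) ⊗≫ 𝟙 ((x ⊗ u) ⊗ (y ⊗ v)) := by
        rw [← whisker_exchange]
    _ = _ := by monoidal
end
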